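/- Let G be a finite simple graph in which every vertex has degree at most d, and let n be an integer with n ≥ d + 2. Then any two proper n-colorings φ, ψ of G (i.e., graph homomorphisms from G to the complete graph K_n) can be joined by a finite sequence of proper n-colorings φ = c_0, c_1, …, c_N = ψ such that for each i the colorings c_i and c_{i+1} differ at exactly one vertex of G. (Equivalently, the complex Hom(G, K_n) is connected.) -/

import Mathlib

/-- If every vertex of the finite simple graph `G` has degree at most `d`
and `n ≥ d + 2`, then any two proper `n`-colorings of `G` are connected by a sequence of
proper `n`-colorings, consecutive ones differing at exactly one vertex
(i.e. `Hom(G, K_n)` is connected). -/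
theorem hom_G_Kn_connected {V : Type} [Fintype V] (G : SimpleGraph V)
    [DecidableRel G.Adj] (d n : ℕ) (hdeg : ∀ v : V, G.degree v ≤ d)
    (hn : d + 2 ≤ n)
    (φ ψ : {c : V → Fin n // ∀ x y : V, G.Adj x y → c x ≠ c y}) :
    Relation.ReflTransGen
      (fun c c' : {c : V → Fin n // ∀ x y : V, G.Adj x y → c x ≠ c y} =>
        ∃! v : V, c.1 v ≠ c'.1 v) φ ψ := by
  classical
  set R : {c : V → Fin n // ∀ x y : V, G.Adj x y → c x ≠ c y} →
      {c : V → Fin n // ∀ x y : V, G.Adj x y → c x ≠ c y} → Prop :=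
    fun c c' => ∃! v : V, c.1 v ≠ c'.1 v with hR
  -- a free color for w, avoiding all neighbors' colors and a given color b
  have hfree : ∀ (c : V → Fin n) (w : V) (b : Fin n),
      ∃ a : Fin n, a ≠ b ∧ ∀ u, G.Adj w u → a ≠ c u := by
    intro c w b
    have hcard : ((G.neighborFinset w).image c ∪ {b}).card < n := by
      calc ((G.neighborFinset w).image c ∪ {b}).card
          ≤ ((G.neighborFinset w).image c).card + ({b} : Finset (Fin n)).card :=
            Finset.card_union_le _ _
        _ ≤ (G.neighborFinset w).card + 1 := by
            rw [Finset.card_singleton]; exact Nat.add_le_add_right (Finset.card_image_le) 1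
        _ = G.degree w + 1 := by rw [SimpleGraph.card_neighborFinset_eq_degree]
        _ ≤ d + 1 := by have := hdeg w; omega
        _ < n := by omega
    have hnonempty : (((G.neighborFinset w).image c ∪ {b})ᶜ : Finset (Fin n)).Nonempty := by
      rw [← Finset.card_pos, Finset.card_compl]
      simp only [Fintype.card_fin]
      omega
    obtain ⟨a, ha⟩ := hnonempty
    rw [Finset.mem_compl, Finset.mem_union, Finset.mem_singleton] at ha
    push_neg at ha
    refine ⟨a, ha.2, fun u hu hau => ha.1 ?_⟩
    rw [hau]
    exact Finset.mem_image_of_mem c ((SimpleGraph.mem_neighborFinset G w u).2 hu)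
  -- step lemma: fix the color at a disagreeing vertex v without creating new disagreements
  have step : ∀ (k : ℕ) (c : {c : V → Fin n // ∀ x y : V, G.Adj x y → c x ≠ c y}) (v : V),
      c.1 v ≠ ψ.1 v →
      ((G.neighborFinset v).filter (fun w => c.1 w = ψ.1 v)).card ≤ k →
      ∃ c', Relation.ReflTransGen R c c' ∧ c'.1 v = ψ.1 v ∧
        ∀ x, c'.1 x ≠ ψ.1 x → c.1 x ≠ ψ.1 x := by
    intro k
    induction k with
    | zero =>
      intro c v hv hk
      have hempty : ∀ w, G.Adj v w → c.1 w ≠ ψ.1 v := by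
        intro w hw hcw
        have : w ∈ (G.neighborFinset v).filter (fun w => c.1 w = ψ.1 v) := by
          simp [hw, hcw]
        have := Finset.card_pos.2 ⟨w, this⟩
        omega
      refine ⟨⟨Function.update c.1 v (ψ.1 v), ?_⟩, ?_, ?_, ?_⟩
      · intro x y hxy
        rcases eq_or_ne x v with rfl | hx
        · rw [Function.update_self, Function.update_of_ne (G.ne_of_adj hxy).symm]
          exact fun h => hempty y hxy h.symm
        · rw [Function.update_of_ne hx]
          rcases eq_or_ne y v with rfl | hy
          · rw [Function.update_self]
            exact fun h => hempty x hxy.symm h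
          · rw [Function.update_of_ne hy]; exact c.2 x y hxy
      · refine Relation.ReflTransGen.single ⟨v, ?_, ?_⟩
        · simpa using hv
        · intro x hx
          by_contra hxv
          exact hx (by simp [Function.update_of_ne hxv])
      · simp
      · intro x hx
        rcases eq_or_ne x v with rfl | hxv
        · simp at hx
        · simpa [Function.update_of_ne hxv] using hx
    | succ k ih =>
      intro c v hv hk
      by_cases hle : ((G.neighborFinset v).filter (fun w => c.1 w = ψ.1 v)).card ≤ k
      · exact ih c v hv hle
      · have hpos : 0 < ((G.neighborFinset v).filter (fun w => c.1 w = ψ.1 v)).card := by omega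
        obtain ⟨w, hw⟩ := Finset.card_pos.1 hpos
        rw [Finset.mem_filter, SimpleGraph.mem_neighborFinset] at hw
        obtain ⟨hwv, hcw⟩ := hw
        obtain ⟨a, hab, hadj⟩ := hfree c.1 w (ψ.1 v)
        have hne_wv : w ≠ v := G.ne_of_adj hwv.symm
        -- the new coloring c₂
        have hproper : ∀ x y : V, G.Adj x y →
            Function.update c.1 w a x ≠ Function.update c.1 w a y := by
          intro x y hxy
          rcases eq_or_ne x w with rfl | hx
          · rw [Function.update_self, Function.update_of_ne (G.ne_of_adj hxy).symm]
            exact hadj y hxy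
          · rw [Function.update_of_ne hx]
            rcases eq_or_ne y w with rfl | hy
            · rw [Function.update_self]
              exact fun h => hadj x hxy.symm h.symm
            · rw [Function.update_of_ne hy]; exact c.2 x y hxy
        set c₂ : {c : V → Fin n // ∀ x y : V, G.Adj x y → c x ≠ c y} :=
          ⟨Function.update c.1 w a, hproper⟩ with hc₂
        have hc₂w : c₂.1 w = a := by simp [hc₂]
        have hc₂x : ∀ x, x ≠ w → c₂.1 x = c.1 x := by
          intro x hx; simp [hc₂, Function.update_of_ne hx]
        have hv₂ : c₂.1 v ≠ ψ.1 v := by rw [hc₂x v hne_wv.symm]; exact hv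
        have hsubset : (G.neighborFinset v).filter (fun u => c₂.1 u = ψ.1 v) ⊆
            ((G.neighborFinset v).filter (fun u => c.1 u = ψ.1 v)).erase w := by
          intro u hu
          rw [Finset.mem_filter] at hu
          have huw : u ≠ w := by
            rintro rfl
            rw [hc₂w] at hu
            exact hab hu.2
          rw [Finset.mem_erase, Finset.mem_filter]
          exact ⟨huw, hu.1, by rw [← hc₂x u huw]; exact hu.2⟩
        have hcard₂ : ((G.neighborFinset v).filter (fun u => c₂.1 u = ψ.1 v)).card ≤ k := by
          have h1 := Finset.card_le_card hsubset
          have h2 : w ∈ (G.neighborFinset v).filter (fun u => c.1 u = ψ.1 v) := by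
            simp [hwv, hcw]
          rw [Finset.card_erase_of_mem h2] at h1
          omega
        obtain ⟨c', hchain, hcv, hsub⟩ := ih c₂ v hv₂ hcard₂
        refine ⟨c', Relation.ReflTransGen.head ⟨w, ?_, ?_⟩ hchain, hcv, ?_⟩
        · show c.1 w ≠ c₂.1 w
          rw [hc₂w, hcw]
          exact fun h => hab h.symm
        · intro x hx
          by_contra hxw
          exact hx (by rw [hc₂x x hxw])
        · intro x hx
          rcases eq_or_ne x w with rfl | hxw
          · rw [hcw]
            exact ψ.2 v x hwv
          · rw [← hc₂x x hxw]
            exact hsub x hx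
  -- main induction on the number of disagreements
  have main : ∀ (m : ℕ) (c : {c : V → Fin n // ∀ x y : V, G.Adj x y → c x ≠ c y}),
      (Finset.univ.filter (fun x => c.1 x ≠ ψ.1 x)).card ≤ m →
      Relation.ReflTransGen R c ψ := by
    intro m
    induction m with
    | zero =>
      intro c hc
      have : c = ψ := by
        apply Subtype.ext
        funext x
        by_contra hx
        have : x ∈ Finset.univ.filter (fun x => c.1 x ≠ ψ.1 x) := by simp [hx]
        have := Finset.card_pos.2 ⟨x, this⟩
        omega
      rw [this]
    | succ m ih =>
      intro c hc
      by_cases hle : (Finset.univ.filter (fun x => c.1 x ≠ ψ.1 x)).card ≤ m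
      · exact ih c hle
      · have hpos : 0 < (Finset.univ.filter (fun x => c.1 x ≠ ψ.1 x)).card := by omega
        obtain ⟨v, hv⟩ := Finset.card_pos.1 hpos
        rw [Finset.mem_filter] at hv
        obtain ⟨c', hchain, hcv, hsub⟩ := step
          ((G.neighborFinset v).filter (fun w => c.1 w = ψ.1 v)).card c v hv.2 le_rfl
        have hsubset : Finset.univ.filter (fun x => c'.1 x ≠ ψ.1 x) ⊆
            (Finset.univ.filter (fun x => c.1 x ≠ ψ.1 x)).erase v := by
          intro x hx
          rw [Finset.mem_filter] at hx
          have hxv : x ≠ v := by rintro rfl; exact hx.2 hcv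
          rw [Finset.mem_erase, Finset.mem_filter]
          exact ⟨hxv, Finset.mem_univ x, hsub x hx.2⟩
        have hcard' : (Finset.univ.filter (fun x => c'.1 x ≠ ψ.1 x)).card ≤ m := by
          have h1 := Finset.card_le_card hsubset
          have h2 : v ∈ Finset.univ.filter (fun x => c.1 x ≠ ψ.1 x) := by simp [hv.2]
          rw [Finset.card_erase_of_mem h2] at h1
          omega
        exact hchain.trans (ih c' hcard')
  exact main _ φ le_rfl
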